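/- Invertibility of the transform Ψ_h^l: for h = 2^t with 1 ≤ t ≤ r and any 0 ≤ l < 2^r, the F-linear map from F^h to F^h sending (d_0, …, d_{h−1}) to the evaluation vector ((Σ_{i=0}^{h−1} d_i·X_i)(ω_j + ω_l))_{j=0}^{h−1} is bijective. -/

import Mathlib

open Polynomial Finset

attribute [local instance] ZMod.algebra

/-- `ω_i = Σ_{j<r} i_j · v_j`, where `i_j` are the binary digits of `i`. -/
noncomputable def omegaF {F : Type*} [Field F] {r : ℕ} (v : Fin r → F) (i : ℕ) : F :=
  ∑ j : Fin r, if Nat.testBit i (j : ℕ) then v j else 0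

/-- The subspace vanishing polynomial `W_j(X) = ∏_{i=0}^{2^j-1} (X - ω_i)`. -/
noncomputable def Wpoly {F : Type*} [Field F] {r : ℕ} (v : Fin r → F) (j : ℕ) : Polynomial F :=
  ∏ i ∈ Finset.range (2 ^ j), (Polynomial.X - Polynomial.C (omegaF v i))

/-- The basis polynomial `X_i(X) = ∏_{j<r} (W_j(X)/W_j(ω_{2^j}))^{i_j}`. -/
noncomputable def Xpoly {F : Type*} [Field F] {r : ℕ} (v : Fin r → F) (i : ℕ) : Polynomial F :=
  ∏ j ∈ Finset.range r,
    if Nat.testBit i j then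
      Polynomial.C (((Wpoly v j).eval (omegaF v (2 ^ j)))⁻¹) * Wpoly v j
    else 1

/-- The recursively defined polynomials `Δ_i^m`:
`Δ_t^m = C (d m)` and `Δ_i^m = Δ_{i+1}^m + (W_i/W_i(ω_{2^i})) · Δ_{i+1}^{m+2^i}` for `i < t`. -/
noncomputable def Delta {F : Type*} [Field F] {r : ℕ} (v : Fin r → F) (d : ℕ → F)
    (t i m : ℕ) : Polynomial F :=
  if i < t then
    Delta v d t (i + 1) m +
      Polynomial.C (((Wpoly v i).eval (omegaF v (2 ^ i)))⁻¹) * Wpoly v i *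
        Delta v d t (i + 1) (m + 2 ^ i)
  else Polynomial.C (d m)
termination_by t - i
decreasing_by all_goals omega

/-- The constant `W'_l = (∏_{j=1}^{2^l-1} ω_j) / W_l(ω_{2^l})`. -/
noncomputable def Wd {F : Type*} [Field F] {r : ℕ} (v : Fin r → F) (l : ℕ) : F :=
  (∏ j ∈ Finset.Ico 1 (2 ^ l), omegaF v j) / (Wpoly v l).eval (omegaF v (2 ^ l))

section aux

variable {F : Type*} [Field F] [CharP F 2] {r : ℕ} (v : Fin r → F)
  (hv : LinearIndependent (ZMod 2) v)

include hv in
lemma omega_inj {a b : ℕ} (ha : a < 2 ^ r) (hb : b < 2 ^ r)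
    (h : omegaF v a = omegaF v b) : a = b := by
  have key : ∀ j : Fin r, a.testBit j = b.testBit j := by
    have h0 : ∑ j : Fin r, ((if a.testBit (j:ℕ) then (1 : ZMod 2) else 0)
        - (if b.testBit (j:ℕ) then (1 : ZMod 2) else 0)) • v j = 0 := by
      have : ∀ (c : ℕ) (j : Fin r),
          (if c.testBit (j:ℕ) then (1 : ZMod 2) else 0) • v j
            = (if c.testBit (j:ℕ) then v j else 0) := by
        intro c j; split <;> simp
      simp only [sub_smul, Finset.sum_sub_distrib, this]
      rw [show (∑ j : Fin r, if a.testBit (j:ℕ) then v j else 0) = omegaF v a from rfl,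
        show (∑ j : Fin r, if b.testBit (j:ℕ) then v j else 0) = omegaF v b from rfl, h,
        sub_self]
    have := Fintype.linearIndependent_iff.mp hv _ h0
    intro j
    have hj := this j
    by_cases h1 : a.testBit (j:ℕ) <;> by_cases h2 : b.testBit (j:ℕ) <;>
      simp_all <;> exact one_ne_zero hj
  refine Nat.eq_of_testBit_eq fun j => ?_
  by_cases hjr : j < r
  · exact key ⟨j, hjr⟩
  · have h1 : a.testBit j = false :=
      Nat.testBit_lt_two_pow (lt_of_lt_of_le ha (Nat.pow_le_pow_right (by norm_num) (le_of_not_gt hjr)))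
    have h2 : b.testBit j = false :=
      Nat.testBit_lt_two_pow (lt_of_lt_of_le hb (Nat.pow_le_pow_right (by norm_num) (le_of_not_gt hjr)))
    rw [h1, h2]

lemma Wpoly_monic (j : ℕ) : (Wpoly v j).Monic :=
  monic_prod_of_monic _ _ fun i _ => monic_X_sub_C _

lemma Wpoly_natDegree (j : ℕ) : (Wpoly v j).natDegree = 2 ^ j := by
  rw [Wpoly, natDegree_prod_of_monic _ _ fun i _ => monic_X_sub_C _]
  simp

include hv in
lemma Wpoly_eval_ne (j : ℕ) (hj : j < r) :
    (Wpoly v j).eval (omegaF v (2 ^ j)) ≠ 0 := by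
  rw [Wpoly, eval_prod]
  refine Finset.prod_ne_zero_iff.mpr fun i hi => ?_
  simp only [eval_sub, eval_X, eval_C, sub_ne_zero]
  intro heq
  have hi' : i < 2 ^ j := Finset.mem_range.mp hi
  have h2j : 2 ^ j < 2 ^ r := Nat.pow_lt_pow_right (by norm_num) hj
  exact absurd (omega_inj v hv h2j (lt_trans hi' h2j) heq) (by omega)

lemma sum_testBit : ∀ (n i : ℕ), i < 2 ^ n →
    (∑ j ∈ Finset.range n, if i.testBit j then 2 ^ j else 0) = i := by
  intro n
  induction n with
  | zero => intro i hi; interval_cases i; simp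
  | succ n ih =>
    intro i hi
    rw [Finset.sum_range_succ']
    have h1 : ∀ j, (if i.testBit (j + 1) then 2 ^ (j + 1) else 0)
        = 2 * (if (i / 2).testBit j then 2 ^ j else 0) := by
      intro j
      rw [Nat.testBit_succ]
      split <;> ring
    simp only [h1, ← Finset.mul_sum]
    rw [ih (i / 2) (by omega)]
    by_cases hpar : i % 2 = 1
    · simp [Nat.testBit_zero, hpar]; omega
    · have : i % 2 = 0 := by omega
      simp [Nat.testBit_zero, this]; omega

include hv in
lemma Xpoly_factor_ne (i j : ℕ) (hj : j ∈ Finset.range r) :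
    (if Nat.testBit i j then
      Polynomial.C (((Wpoly v j).eval (omegaF v (2 ^ j)))⁻¹) * Wpoly v j
    else 1) ≠ 0 := by
  split
  · exact mul_ne_zero (C_ne_zero.mpr (inv_ne_zero (Wpoly_eval_ne v hv j (Finset.mem_range.mp hj))))
      (Wpoly_monic v j).ne_zero
  · exact one_ne_zero

include hv in
lemma Xpoly_ne_zero (i : ℕ) : Xpoly v i ≠ 0 :=
  Finset.prod_ne_zero_iff.mpr (Xpoly_factor_ne v hv i)

include hv in
lemma Xpoly_natDegree (i : ℕ) (hi : i < 2 ^ r) : (Xpoly v i).natDegree = i := by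
  rw [Xpoly, natDegree_prod _ _ (Xpoly_factor_ne v hv i)]
  have : ∀ j ∈ Finset.range r,
      (if Nat.testBit i j then
        Polynomial.C (((Wpoly v j).eval (omegaF v (2 ^ j)))⁻¹) * Wpoly v j
      else 1).natDegree = if i.testBit j then 2 ^ j else 0 := by
    intro j hj
    split
    · rw [natDegree_C_mul (inv_ne_zero (Wpoly_eval_ne v hv j (Finset.mem_range.mp hj))),
        Wpoly_natDegree]
    · simp
  rw [Finset.sum_congr rfl this, sum_testBit r i hi]

end aux


/-- Invertibility of the transform `Ψ_h^l`: for `h = 2^t` with `1 ≤ t ≤ r`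
and any `0 ≤ l < 2^r`, the map `F^h → F^h` sending `(d_0, …, d_{h-1})` to the evaluation
vector `((Σ_{i<h} d_i · X_i)(ω_j + ω_l))_{j<h}` is bijective. -/
theorem statement16 (r : ℕ) (hr : 1 ≤ r) (F : Type*) [Field F] [Fintype F] [CharP F 2]
    (hcard : Fintype.card F = 2 ^ r) (v : Fin r → F)
    (hv : LinearIndependent (ZMod 2) v) (t : ℕ) (ht1 : 1 ≤ t) (htr : t ≤ r)
    (l : ℕ) (hl : l < 2 ^ r) :
    Function.Bijective (fun d : Fin (2 ^ t) → F => fun j : Fin (2 ^ t) =>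
      (∑ i : Fin (2 ^ t), Polynomial.C (d i) * Xpoly v (i : ℕ)).eval
        (omegaF v (j : ℕ) + omegaF v l)) := by
  classical
  have hpow : (2 : ℕ) ^ t ≤ 2 ^ r := Nat.pow_le_pow_right (by norm_num) htr
  rw [← Finite.injective_iff_bijective]
  intro d d' heq
  set e : Fin (2 ^ t) → F := fun i => d i - d' i with he
  set P : Polynomial F := ∑ i : Fin (2 ^ t), Polynomial.C (e i) * Xpoly v (i : ℕ) with hP
  have hsum : P = (∑ i : Fin (2 ^ t), Polynomial.C (d i) * Xpoly v (i : ℕ))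
      - (∑ i : Fin (2 ^ t), Polynomial.C (d' i) * Xpoly v (i : ℕ)) := by
    rw [hP, ← Finset.sum_sub_distrib]
    refine Finset.sum_congr rfl fun i _ => ?_
    rw [he]; simp [map_sub, sub_mul]
  have heval : ∀ j : Fin (2 ^ t), P.eval (omegaF v (j : ℕ) + omegaF v l) = 0 := by
    intro j
    rw [hsum, eval_sub]
    have := congrFun heq j
    simp only at this
    rw [this, sub_self]
  have hf : Function.Injective (fun j : Fin (2 ^ t) => omegaF v (j : ℕ) + omegaF v l) := by
    intro j1 j2 hj
    simp only [add_left_inj] at hj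
    exact Fin.ext (omega_inj v hv (lt_of_lt_of_le j1.isLt hpow)
      (lt_of_lt_of_le j2.isLt hpow) hj)
  have hdeg : P.natDegree < 2 ^ t := by
    have h1 : P.natDegree ≤ 2 ^ t - 1 := by
      refine Polynomial.natDegree_sum_le_of_forall_le _ _ fun i _ => ?_
      refine le_trans (natDegree_C_mul_le _ _) ?_
      rw [Xpoly_natDegree v hv (i : ℕ) (lt_of_lt_of_le i.isLt hpow)]
      omega
    have : (0 : ℕ) < 2 ^ t := Nat.pow_pos (by norm_num)
    omega
  have hP0 : P = 0 := by
    refine Polynomial.eq_zero_of_natDegree_lt_card_of_eval_eq_zero P hf heval ?_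
    rwa [Fintype.card_fin]
  have he0 : ∀ i : Fin (2 ^ t), e i = 0 := by
    by_contra hne
    push_neg at hne
    obtain ⟨i1, hi1⟩ := hne
    set s : Finset (Fin (2 ^ t)) := Finset.univ.filter (fun i => e i ≠ 0) with hs
    have hsne : s.Nonempty := ⟨i1, by simp [hs, hi1]⟩
    set i0 : Fin (2 ^ t) := s.max' hsne with hi0
    have hi0s : i0 ∈ s := s.max'_mem hsne
    have hei0 : e i0 ≠ 0 := (Finset.mem_filter.mp hi0s).2
    have hcoeff : P.coeff (i0 : ℕ) = e i0 * (Xpoly v (i0 : ℕ)).coeff (i0 : ℕ) := by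
      rw [hP, Polynomial.finset_sum_coeff]
      rw [Finset.sum_eq_single i0]
      · rw [coeff_C_mul]
      · intro i _ hii0
        rw [coeff_C_mul]
        by_cases hei : e i = 0
        · rw [hei, zero_mul]
        · have his : i ∈ s := Finset.mem_filter.mpr ⟨Finset.mem_univ _, hei⟩
          have hle : i ≤ i0 := s.le_max' i his
          have hlt : (i : ℕ) < (i0 : ℕ) := by
            rcases lt_or_eq_of_le hle with h | h
            · exact h
            · exact absurd h hii0
          rw [Polynomial.coeff_eq_zero_of_natDegree_lt, mul_zero]
          rw [Xpoly_natDegree v hv (i : ℕ) (lt_of_lt_of_le i.isLt hpow)]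
          exact hlt
      · intro h; exact absurd (Finset.mem_univ i0) h
    have hXlc : (Xpoly v (i0 : ℕ)).coeff (i0 : ℕ) ≠ 0 := by
      have hnd := Xpoly_natDegree v hv (i0 : ℕ) (lt_of_lt_of_le i0.isLt hpow)
      have hlc : (Xpoly v (i0 : ℕ)).coeff (i0 : ℕ) = (Xpoly v (i0 : ℕ)).leadingCoeff := by
        rw [Polynomial.leadingCoeff, hnd]
      rw [hlc]
      exact Polynomial.leadingCoeff_ne_zero.mpr (Xpoly_ne_zero v hv _)
    rw [hP0, Polynomial.coeff_zero] at hcoeff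
    exact (mul_ne_zero hei0 hXlc) hcoeff.symm
  funext i
  exact sub_eq_zero.mp (he0 i)
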